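/- arXiv:2404.16059 — 2 statements merged into one kernel-verified Lean document; each statement's English description precedes it below -/
import Mathlib

section
/- Let T, G be bounded linear operators on a Hilbert space H with G having closed range. Then range(T) ⊆ range(G) if and only if there exists α > 0 such that α‖T*x‖² ≤ ‖G*x‖² for all x ∈ H. -/
open ContinuousLinearMap

theorem range_inclusion_iff_norm_ineq
    {H : Type*} [NormedAddCommGroup H] [InnerProductSpace ℂ H] [CompleteSpace H]
    (T G : H →L[ℂ] H) (hG : IsClosed (Set.range G)) :
    Set.range T ⊆ Set.range G ↔
      ∃ α : ℝ, 0 < α ∧ ∀ x : H,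
        α * ‖ContinuousLinearMap.adjoint T x‖^2 ≤ ‖ContinuousLinearMap.adjoint G x‖^2 := by
  constructor
  · intro hsub
    -- G : H → range G is surjective, closed range so complete, get bounded preimages
    set K : Submodule ℂ H := LinearMap.range G.toLinearMap with hK
    have hKc : IsClosed (K : Set H) := by
      simpa [hK, LinearMap.coe_range] using hG
    haveI : CompleteSpace K := hKc.completeSpace_coe
    set G' : H →L[ℂ] K := G.codRestrict K (fun x => LinearMap.mem_range_self G.toLinearMap x)
    have hsurj : Function.Surjective G' := by
      rintro ⟨y, hy⟩
      obtain ⟨v, hv⟩ := hy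
      exact ⟨v, Subtype.ext hv⟩
    obtain ⟨C, hCpos, hC⟩ := G'.exists_preimage_norm_le hsurj
    refine ⟨(C * ‖T‖ + 1)⁻¹ ^ 2, by positivity, fun x => ?_⟩
    have key : ‖adjoint T x‖ ≤ (C * ‖T‖ + 1) * ‖adjoint G x‖ := by
      rcases eq_or_ne (adjoint T x) 0 with h0 | h0
      · simp [h0]; positivity
      · set u := adjoint T x
        have hTu : T u ∈ K := hsub ⟨u, rfl⟩
        obtain ⟨v, hv, hvn⟩ := hC ⟨T u, hTu⟩
        have hGv : G v = T u := congrArg Subtype.val hv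
        have h1 : (‖u‖ : ℝ)^2 = ‖(inner ℂ x (T u) : ℂ)‖ := by
          rw [← ContinuousLinearMap.adjoint_inner_left,
            show ContinuousLinearMap.adjoint T x = u from rfl,
            inner_self_eq_norm_sq_to_K]
          simp [norm_pow]
        have h2 : ‖(inner ℂ x (T u) : ℂ)‖ ≤ ‖adjoint G x‖ * ‖v‖ := by
          rw [← hGv, ← ContinuousLinearMap.adjoint_inner_left]
          exact norm_inner_le_norm _ _
        have h3 : ‖v‖ ≤ C * (‖T‖ * ‖u‖) := by
          calc ‖v‖ ≤ C * ‖(⟨T u, hTu⟩ : K)‖ := hvn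
            _ = C * ‖T u‖ := rfl
            _ ≤ C * (‖T‖ * ‖u‖) := by
                exact mul_le_mul_of_nonneg_left (T.le_opNorm u) hCpos.le
        have hu : (‖u‖:ℝ)^2 ≤ ‖adjoint G x‖ * (C * (‖T‖ * ‖u‖)) := by
          refine h1.trans_le (h2.trans ?_)
          exact mul_le_mul_of_nonneg_left h3 (norm_nonneg _)
        have hupos : 0 < ‖u‖ := norm_pos_iff.mpr h0
        have : ‖u‖ ≤ ‖adjoint G x‖ * (C * ‖T‖) := by
          have := hu
          rw [pow_two] at this
          nlinarith
        calc ‖u‖ ≤ ‖adjoint G x‖ * (C * ‖T‖) := this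
          _ ≤ (C * ‖T‖ + 1) * ‖adjoint G x‖ := by nlinarith [norm_nonneg (adjoint G x)]
    have hpos : (0:ℝ) < C * ‖T‖ + 1 := by positivity
    have := mul_le_mul key key (norm_nonneg _) (by positivity)
    calc (C * ‖T‖ + 1)⁻¹ ^ 2 * ‖adjoint T x‖ ^ 2
        ≤ (C * ‖T‖ + 1)⁻¹ ^ 2 * ((C * ‖T‖ + 1) * ‖adjoint G x‖)^2 := by
          apply mul_le_mul_of_nonneg_left _ (by positivity)
          rw [pow_two, pow_two]; exact this
      _ = ‖adjoint G x‖ ^ 2 := by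
          field_simp
  · rintro ⟨α, hα, hineq⟩
    rintro y ⟨u, rfl⟩
    set K : Submodule ℂ H := LinearMap.range G.toLinearMap with hK
    have hKc : IsClosed (K : Set H) := by
      simpa [hK, LinearMap.coe_range] using hG
    haveI : CompleteSpace K := hKc.completeSpace_coe
    have horth : Kᗮᗮ = K := Submodule.orthogonal_orthogonal K
    have : T u ∈ Kᗮᗮ := by
      intro v hv
      -- v ∈ Kᗮ : orthogonal to all of range G, so G* v = 0, so T* v = 0
      have hGv : adjoint G v = 0 := by
        rw [← inner_self_eq_zero (𝕜 := ℂ)]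
        rw [ContinuousLinearMap.adjoint_inner_left]
        exact inner_eq_zero_symm.mp (hv (G (adjoint G v)) ⟨_, rfl⟩)
      have hTv : adjoint T v = 0 := by
        have h := hineq v
        rw [hGv] at h
        simp only [norm_zero] at h
        have : ‖adjoint T v‖^2 ≤ 0 := by nlinarith
        have : ‖adjoint T v‖ = 0 := by nlinarith [sq_nonneg ‖adjoint T v‖, norm_nonneg (adjoint T v)]
        exact norm_eq_zero.mp this
      rw [← ContinuousLinearMap.adjoint_inner_left, hTv, inner_zero_left]
    rw [horth] at this
    exact this
end

section
/- Let T ∈ L(H) have closed range and satisfy T² = T. Then the Moore–Penrose inverse of T equals the composition P_{range(T*)} P_{range(T)} of the orthogonal projections onto range(T*) and range(T): T† = P_{range(T*)} ∘ P_{range(T)}. -/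
open ContinuousLinearMap

/-- `Td` is the Moore–Penrose inverse of `T`. -/
def IsMoorePenrose {H : Type*} [NormedAddCommGroup H] [InnerProductSpace ℂ H]
    [CompleteSpace H] (T Td : H →L[ℂ] H) : Prop :=
  T ∘L Td ∘L T = T ∧ Td ∘L T ∘L Td = Td ∧
    IsSelfAdjoint (T ∘L Td) ∧ IsSelfAdjoint (Td ∘L T)

/-- `P` is the orthogonal projection of `H` onto the subspace `E`. -/
def IsOrthoProjOnto {H : Type*} [NormedAddCommGroup H] [InnerProductSpace ℂ H]
    [CompleteSpace H] (P : H →L[ℂ] H) (E : Submodule ℂ H) : Prop :=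
  ∀ x : H, P x ∈ E ∧ x - P x ∈ Eᗮ

lemma orthoProj_unique {H : Type*} [NormedAddCommGroup H] [InnerProductSpace ℂ H]
    [CompleteSpace H] {P P' : H →L[ℂ] H} {E : Submodule ℂ H}
    (hP : IsOrthoProjOnto P E) (hP' : IsOrthoProjOnto P' E) : P = P' := by
  ext x
  obtain ⟨h1, h2⟩ := hP x
  obtain ⟨h1', h2'⟩ := hP' x
  have hv : P x - P' x ∈ E := E.sub_mem h1 h1'
  have hv' : P x - P' x ∈ Eᗮ := by
    have := Eᗮ.sub_mem h2' h2
    simpa [sub_sub_sub_cancel_left] using this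
  have h0 : (inner ℂ (P x - P' x) (P x - P' x) : ℂ) = 0 :=
    (Submodule.mem_orthogonal E _).mp hv' _ hv
  have : P x - P' x = 0 := inner_self_eq_zero.mp h0
  exact sub_eq_zero.mp this

theorem MP_of_idempotent
    {H : Type*} [NormedAddCommGroup H] [InnerProductSpace ℂ H] [CompleteSpace H]
    (T Td P Q : H →L[ℂ] H) (hcl : IsClosed (Set.range T))
    (hidem : T ∘L T = T) (hMP : IsMoorePenrose T Td)
    (hP : IsOrthoProjOnto P (LinearMap.range (T : H →ₗ[ℂ] H)))
    (hQ : IsOrthoProjOnto Q (LinearMap.range ((adjoint T : H →L[ℂ] H) : H →ₗ[ℂ] H))) :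
    Td = Q ∘L P := by
  obtain ⟨h1, h2, h3, h4⟩ := hMP
  have h3' : adjoint (T ∘L Td) = T ∘L Td := h3
  have h4' : adjoint (Td ∘L T) = Td ∘L T := h4
  -- T ∘L Td is the orthogonal projection onto range T
  have hTTd : IsOrthoProjOnto (T ∘L Td) (LinearMap.range (T : H →ₗ[ℂ] H)) := by
    intro x
    constructor
    · exact ⟨Td x, rfl⟩
    · rw [Submodule.mem_orthogonal]
      rintro u ⟨y, rfl⟩
      have : (inner ℂ (T y) ((T ∘L Td) x) : ℂ) = inner ℂ (T y) x := by
        rw [← adjoint_inner_left, h3']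
        have : (T ∘L Td) (T y) = T y := congrArg (fun f => f y) h1
        simp only [this]
      simp only [comp_apply] at this
      simp [inner_sub_right, this]
  -- Td ∘L T is the orthogonal projection onto range T*
  have hTdT : IsOrthoProjOnto (Td ∘L T) (LinearMap.range ((adjoint T : H →L[ℂ] H) : H →ₗ[ℂ] H)) := by
    intro x
    constructor
    · have : (Td ∘L T) x = adjoint T (adjoint Td x) := by
        conv_lhs => rw [← h4']
        simp [adjoint_comp]
      rw [this]; exact ⟨adjoint Td x, rfl⟩
    · rw [Submodule.mem_orthogonal]
      rintro u ⟨y, rfl⟩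
      have : (inner ℂ (adjoint T y) ((Td ∘L T) x) : ℂ) = inner ℂ (adjoint T y) x := by
        rw [adjoint_inner_left, adjoint_inner_left]
        have : T ((Td ∘L T) x) = T x := congrArg (fun f => f x) h1
        simp only [comp_apply] at this ⊢
        rw [this]
      simp only [comp_apply] at this
      simp [inner_sub_right, this]
  have hPeq : P = T ∘L Td := orthoProj_unique hP hTTd
  have hQeq : Q = Td ∘L T := orthoProj_unique hQ hTdT
  rw [hPeq, hQeq]
  calc Td = Td ∘L T ∘L Td := h2.symm
    _ = Td ∘L (T ∘L T) ∘L Td := by rw [hidem]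
    _ = (Td ∘L T) ∘L (T ∘L Td) := by simp [comp_assoc]
end
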